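/- arXiv:1311.6377 — 2 statements merged into one kernel-verified Lean document; each statement's English description precedes it below -/
import Mathlib

section
/- If p: [0,∞) → ℝ is differentiable, p(t) > 1 for all t, and p satisfies -(3C₀/2)ρ₀(p(t)-1)^{2+2n} ≤ p'(t) ≤ -(C₀/2)ρ₀(p(t)-1)^{2+2n} with p(0) ≥ 11/10, then p(t) → 1 as t → ∞, and there exists a constant C such that |p(t) - 1| ≤ C(1 + ρ₀ t)^{-1/(1+2n)} for all t ≥ 0. -/
open Real Filter

/-- Convergence of `p(t)` to 1 with the algebraic rate `(1+ρ₀t)^{-1/(1+2n)}`. -/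
theorem stmt3 (p p' : ℝ → ℝ) (C₀ ρ₀ n : ℝ) (hC₀ : 0 < C₀) (hρ₀ : 0 < ρ₀) (hn : 0 < n)
    (hgt : ∀ t ≥ (0:ℝ), 1 < p t) (hp0 : 11 / 10 ≤ p 0)
    (hderiv : ∀ t ≥ (0:ℝ), HasDerivAt p (p' t) t)
    (hlow : ∀ t ≥ (0:ℝ), -(3 * C₀ / 2) * ρ₀ * (p t - 1) ^ (2 + 2 * n) ≤ p' t)
    (hupp : ∀ t ≥ (0:ℝ), p' t ≤ -(C₀ / 2) * ρ₀ * (p t - 1) ^ (2 + 2 * n)) :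
    Tendsto p atTop (nhds 1) ∧
      ∃ C : ℝ, 0 < C ∧ ∀ t ≥ (0:ℝ), |p t - 1| ≤ C * (1 + ρ₀ * t) ^ (-(1 / (1 + 2 * n))) := by
  set a : ℝ := 1 + 2 * n with ha_def
  have ha0 : 0 < a := by simp only [ha_def]; linarith
  have ha1 : 1 < a := by simp only [ha_def]; linarith
  have hu : ∀ t ≥ (0:ℝ), 0 < p t - 1 := fun t ht => sub_pos.mpr (hgt t ht)
  set c : ℝ := a * (C₀ / 2) * ρ₀ with hc_def
  have hc : 0 < c := by positivity
  set v : ℝ → ℝ := fun t => (p t - 1) ^ (-a) with hv_def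
  have hv : ∀ t ≥ (0:ℝ), 0 < v t := fun t ht => Real.rpow_pos_of_pos (hu t ht) _
  -- derivative of v
  have hvderiv : ∀ t ≥ (0:ℝ), HasDerivAt v (p' t * (-a) * (p t - 1) ^ (-a - 1)) t := by
    intro t ht
    have h1 : HasDerivAt (fun s => p s - 1) (p' t) t := (hderiv t ht).sub_const 1
    exact h1.rpow_const (Or.inl (ne_of_gt (hu t ht)))
  -- lower bound for v'
  have hvd_ge : ∀ t ≥ (0:ℝ), c ≤ p' t * (-a) * (p t - 1) ^ (-a - 1) := by
    intro t ht
    have hup := hupp t ht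
    have hpos : (0:ℝ) < (p t - 1) ^ (-a - 1) := Real.rpow_pos_of_pos (hu t ht) _
    have key : (p t - 1) ^ (2 + 2 * n) * (p t - 1) ^ (-a - 1) = 1 := by
      rw [← Real.rpow_add (hu t ht)]
      have : (2 + 2 * n) + (-a - 1) = 0 := by simp [ha_def]; ring
      rw [this, Real.rpow_zero]
    have h2 : p' t * (-a) * (p t - 1) ^ (-a - 1)
        ≥ (-(C₀ / 2) * ρ₀ * (p t - 1) ^ (2 + 2 * n)) * (-a) * (p t - 1) ^ (-a - 1) := by
      have hna : (-a) * (p t - 1) ^ (-a - 1) < 0 := by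
        have := mul_pos ha0 hpos; nlinarith
      nlinarith [mul_le_mul_of_nonpos_right hup (le_of_lt hna)]
    calc c = (C₀ / 2) * ρ₀ * a * ((p t - 1) ^ (2 + 2 * n) * (p t - 1) ^ (-a - 1)) := by
            rw [key]; simp [hc_def]; ring
      _ = (-(C₀ / 2) * ρ₀ * (p t - 1) ^ (2 + 2 * n)) * (-a) * (p t - 1) ^ (-a - 1) := by ring
      _ ≤ p' t * (-a) * (p t - 1) ^ (-a - 1) := h2
  -- g is monotone on [0, ∞)
  set g : ℝ → ℝ := fun t => v t - c * t with hg_def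
  have hgderiv : ∀ t ≥ (0:ℝ), HasDerivAt g (p' t * (-a) * (p t - 1) ^ (-a - 1) - c) t := by
    intro t ht
    have h2 : HasDerivAt (fun s => c * s) c t := by
      simpa using (hasDerivAt_id t).const_mul c
    exact (hvderiv t ht).sub h2
  have hgmono : MonotoneOn g (Set.Ici (0:ℝ)) := by
    apply monotoneOn_of_deriv_nonneg (convex_Ici 0)
    · intro t ht
      exact ((hgderiv t ht).continuousAt).continuousWithinAt
    · intro t ht
      rw [interior_Ici] at ht
      exact ((hgderiv t (le_of_lt ht)).differentiableAt).differentiableWithinAt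
    · intro t ht
      rw [interior_Ici] at ht
      rw [(hgderiv t (le_of_lt ht)).deriv]
      have := hvd_ge t (le_of_lt ht)
      linarith
  have hvlb : ∀ t ≥ (0:ℝ), v 0 + c * t ≤ v t := by
    intro t ht
    have := hgmono (Set.self_mem_Ici) (Set.mem_Ici.mpr ht) ht
    simp only [hg_def, mul_zero, sub_zero] at this
    linarith
  have hv0 : 0 < v 0 := hv 0 le_rfl
  -- constants
  set M : ℝ := max (1 / v 0) (2 / (a * C₀)) with hM_def
  have hM : 0 < M := lt_max_of_lt_left (by positivity)
  set C : ℝ := M ^ (1 / a) with hC_def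
  have hC : 0 < C := Real.rpow_pos_of_pos hM _
  have hMv0 : 1 ≤ M * v 0 := by
    have h1 : 1 / v 0 ≤ M := le_max_left _ _
    rw [div_le_iff₀ hv0] at h1; linarith
  have hMc : ρ₀ ≤ M * c := by
    have h1 : 2 / (a * C₀) ≤ M := le_max_right _ _
    have haC : 0 < a * C₀ := by positivity
    rw [div_le_iff₀ haC] at h1
    have : ρ₀ * 2 ≤ M * (a * C₀) * ρ₀ := by nlinarith
    simp only [hc_def]; nlinarith
  -- the main pointwise bound
  have hbound : ∀ t ≥ (0:ℝ), p t - 1 ≤ C * (1 + ρ₀ * t) ^ (-(1 / a)) := by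
    intro t ht
    have h1ρ : (0:ℝ) < 1 + ρ₀ * t := by nlinarith
    have hvt : 0 < v 0 + c * t := by positivity
    have hbase : (v 0 + c * t)⁻¹ ≤ M * (1 + ρ₀ * t)⁻¹ := by
      rw [inv_eq_one_div, inv_eq_one_div, mul_one_div, div_le_div_iff₀ hvt h1ρ]
      nlinarith
    have hut : p t - 1 = (v t) ^ (-(1 / a)) := by
      have e1 : (v t) ^ (-(1/a)) = (p t - 1) ^ ((-a) * (-(1/a))) := by
        simp only [hv_def]
        exact (Real.rpow_mul (le_of_lt (hu t ht)) _ _).symm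
      have e2 : (-a) * (-(1/a)) = 1 := by field_simp
      rw [e1, e2, Real.rpow_one]
    have step1 : (v t) ^ (-(1/a)) ≤ (v 0 + c * t) ^ (-(1/a)) :=
      Real.rpow_le_rpow_of_nonpos hvt (hvlb t ht) (neg_nonpos.mpr (by positivity))
    have step2 : (v 0 + c * t) ^ (-(1/a)) ≤ C * (1 + ρ₀ * t) ^ (-(1/a)) := by
      rw [Real.rpow_neg (le_of_lt hvt), Real.rpow_neg (le_of_lt h1ρ),
        ← Real.inv_rpow (le_of_lt hvt), ← Real.inv_rpow (le_of_lt h1ρ), hC_def,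
        ← Real.mul_rpow (le_of_lt hM) (by positivity)]
      exact Real.rpow_le_rpow (by positivity) hbase (by positivity)
    rw [hut]; exact le_trans step1 step2
  constructor
  · -- tendsto
    have htend0 : Tendsto (fun t => (1 + ρ₀ * t) ^ (-(1 / a))) atTop (nhds 0) := by
      have h1 : Tendsto (fun t => 1 + ρ₀ * t) atTop atTop :=
        tendsto_atTop_add_const_left _ 1 (tendsto_id.const_mul_atTop hρ₀)
      exact (tendsto_rpow_neg_atTop (by positivity)).comp h1
    have htend : Tendsto (fun t => 1 + C * (1 + ρ₀ * t) ^ (-(1 / a))) atTop (nhds 1) := by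
      have := (htend0.const_mul C).const_add 1
      simpa using this
    refine tendsto_of_tendsto_of_tendsto_of_le_of_le' tendsto_const_nhds htend ?_ ?_
    · filter_upwards [eventually_ge_atTop (0:ℝ)] with t ht
      exact le_of_lt (hgt t ht)
    · filter_upwards [eventually_ge_atTop (0:ℝ)] with t ht
      have := hbound t ht; linarith
  · exact ⟨C, hC, fun t ht => by
      rw [abs_of_pos (hu t ht)]
      exact hbound t ht⟩
end

section
/- Let a > 1, b ∈ ℝ, and let ζ₀ > 0 be the unique positive solution of √(1+ζ₀²) + ζ₀²/√(1+ζ₀²) = √(a²+b²), and set R := ζ₀/(5√(1+ζ₀²)). Assume |b|·sin R + |√(a²+b²) - a| ≤ (1/100)·ζ₀²/√(1+ζ₀²) and a ≤ 3√(1+ζ₀²). Then for all ρ ∈ [0, (6/5)ζ₀], θ ∈ [0, R], α ∈ [0,2π]: the function G(ρ,θ,α) := √(1+ρ²) - a cos θ - b sin θ cos α satisfies -G(ρ,θ,α) ≥ (1/2)·ζ₀²/√(1+ζ₀²); in particular G⁻²(ρ,θ,α) ≤ 4(1+ζ₀²)/ζ₀⁴. -/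
open Real

set_option maxHeartbeats 800000

/-- Lower bound on `-G` near the critical point, statement (b) of Lemma on `G_{a,b}`. -/
theorem stmt10 (a b ζ₀ : ℝ) (ha : 1 < a) (hζ₀ : 0 < ζ₀)
    (hdef : Real.sqrt (1 + ζ₀ ^ 2) + ζ₀ ^ 2 / Real.sqrt (1 + ζ₀ ^ 2)
        = Real.sqrt (a ^ 2 + b ^ 2))
    (hsmall : |b| * Real.sin (ζ₀ / (5 * Real.sqrt (1 + ζ₀ ^ 2)))
        + |Real.sqrt (a ^ 2 + b ^ 2) - a|
        ≤ (1 / 100) * ζ₀ ^ 2 / Real.sqrt (1 + ζ₀ ^ 2))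
    (haup : a ≤ 3 * Real.sqrt (1 + ζ₀ ^ 2)) :
    ∀ ρ θ α : ℝ, ρ ∈ Set.Icc 0 ((6 / 5) * ζ₀) →
      θ ∈ Set.Icc 0 (ζ₀ / (5 * Real.sqrt (1 + ζ₀ ^ 2))) →
      α ∈ Set.Icc 0 (2 * π) →
      -(Real.sqrt (1 + ρ ^ 2) - a * Real.cos θ - b * Real.sin θ * Real.cos α)
          ≥ (1 / 2) * ζ₀ ^ 2 / Real.sqrt (1 + ζ₀ ^ 2) ∧
      1 / (Real.sqrt (1 + ρ ^ 2) - a * Real.cos θ - b * Real.sin θ * Real.cos α) ^ 2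
          ≤ 4 * (1 + ζ₀ ^ 2) / ζ₀ ^ 4 := by
  intro ρ θ α hρ hθ hα
  set s := Real.sqrt (1 + ζ₀ ^ 2) with hs_def
  have hs : 0 < s := Real.sqrt_pos.mpr (by positivity)
  have hs2 : s ^ 2 = 1 + ζ₀ ^ 2 := Real.sq_sqrt (by positivity)
  have hζs : ζ₀ < s := by nlinarith
  set R := ζ₀ / (5 * s) with hR_def
  have hR0 : 0 < R := by positivity
  have hRlt : R < 1 / 5 := by
    rw [hR_def, div_lt_iff₀ (by positivity)]; nlinarith
  have hpi : (3:ℝ) < π := Real.pi_gt_three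
  obtain ⟨hθ0, hθR⟩ := hθ
  obtain ⟨hρ0, hρ6⟩ := hρ
  set κ := ζ₀ ^ 2 / s with hκ_def
  have hκpos : 0 < κ := by positivity
  have hκ : κ * s = ζ₀ ^ 2 := div_mul_cancel₀ _ hs.ne'
  have hR2s : 25 * R ^ 2 * s = κ := by
    rw [hR_def, hκ_def]; field_simp; ring
  -- sin R nonneg
  have hsinR0 : 0 ≤ Real.sin R := Real.sin_nonneg_of_nonneg_of_le_pi hR0.le (by linarith)
  -- bound on |b| sin R and on |sqrt - a|
  have h100 : (1 / 100) * ζ₀ ^ 2 / s = κ / 100 := by rw [hκ_def]; ring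
  have hBsin : |b| * Real.sin R ≤ κ / 100 := by
    have := abs_nonneg (Real.sqrt (a ^ 2 + b ^ 2) - a)
    rw [h100] at hsmall; linarith
  have hAabs : |Real.sqrt (a ^ 2 + b ^ 2) - a| ≤ κ / 100 := by
    have : 0 ≤ |b| * Real.sin R := mul_nonneg (abs_nonneg b) hsinR0
    rw [h100] at hsmall; linarith
  have hA : s + κ - κ / 100 ≤ a := by
    have h1 : Real.sqrt (a ^ 2 + b ^ 2) - a ≤ κ / 100 := (abs_le.mp hAabs).2
    have h2 : s + κ = Real.sqrt (a ^ 2 + b ^ 2) := hdef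
    linarith
  -- cos bound
  have hcosθ : 1 - R ^ 2 / 2 ≤ Real.cos θ := by
    calc 1 - R ^ 2 / 2 ≤ 1 - θ ^ 2 / 2 := by nlinarith
    _ ≤ Real.cos θ := Real.one_sub_sq_div_two_le_cos
  have haR2 : a * (R ^ 2 / 2) ≤ 3 / 50 * κ := by
    have h1 : a * R ^ 2 ≤ 3 * s * R ^ 2 :=
      mul_le_mul_of_nonneg_right haup (sq_nonneg R)
    linarith
  have ha0 : (0:ℝ) < a := by linarith
  have hacos : a - 3 / 50 * κ ≤ a * Real.cos θ := by nlinarith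
  -- b term
  have hsinθR : Real.sin θ ≤ Real.sin R :=
    Real.sin_le_sin_of_le_of_le_pi_div_two (by linarith) (by linarith) hθR
  have hsinθ0 : 0 ≤ Real.sin θ := Real.sin_nonneg_of_nonneg_of_le_pi hθ0 (by linarith)
  have hbterm : -(κ / 100) ≤ b * Real.sin θ * Real.cos α := by
    have h1 : |b * Real.sin θ * Real.cos α| ≤ |b| * Real.sin R := by
      rw [abs_mul, abs_mul, abs_of_nonneg hsinθ0]
      have h2 : |b| * Real.sin θ * |Real.cos α| ≤ |b| * Real.sin θ :=
        mul_le_of_le_one_right (mul_nonneg (abs_nonneg b) hsinθ0) (Real.abs_cos_le_one α)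
      have h3 : |b| * Real.sin θ ≤ |b| * Real.sin R :=
        mul_le_mul_of_nonneg_left hsinθR (abs_nonneg b)
      linarith
    have := (abs_le.mp (h1.trans hBsin)).1
    linarith
  -- sqrt(1+ρ²) bound
  have hsqrtρ : Real.sqrt (1 + ρ ^ 2) ≤ s + 11 / 50 * κ := by
    have hρsq : ρ ^ 2 ≤ 36 / 25 * ζ₀ ^ 2 := by nlinarith
    have h1 : 1 + ρ ^ 2 ≤ (s + 11 / 50 * κ) ^ 2 := by nlinarith [sq_nonneg κ, hκ, hs2]
    calc Real.sqrt (1 + ρ ^ 2) ≤ Real.sqrt ((s + 11 / 50 * κ) ^ 2) := Real.sqrt_le_sqrt h1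
      _ = s + 11 / 50 * κ := Real.sqrt_sq (by positivity)
  -- main bound
  have hmain : -(Real.sqrt (1 + ρ ^ 2) - a * Real.cos θ - b * Real.sin θ * Real.cos α)
      ≥ κ / 2 := by linarith
  have hgoalκ : (1 / 2) * ζ₀ ^ 2 / s = κ / 2 := by rw [hκ_def]; ring
  constructor
  · rw [hgoalκ]; exact hmain
  · set g := Real.sqrt (1 + ρ ^ 2) - a * Real.cos θ - b * Real.sin θ * Real.cos α with hg
    have hgneg : κ / 2 ≤ -g := hmain
    have hgsq : κ ^ 2 / 4 ≤ g ^ 2 := by nlinarith [sq_nonneg (g + κ / 2)]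
    have hg2pos : 0 < g ^ 2 := by nlinarith
    rw [div_le_div_iff₀ hg2pos (by positivity)]
    have hκ4 : κ ^ 2 * s ^ 2 = ζ₀ ^ 4 := by
      calc κ ^ 2 * s ^ 2 = (κ * s) ^ 2 := by ring
        _ = (ζ₀ ^ 2) ^ 2 := by rw [hκ]
        _ = ζ₀ ^ 4 := by ring
    have h5 : 4 * s ^ 2 * (κ ^ 2 / 4) ≤ 4 * s ^ 2 * g ^ 2 :=
      mul_le_mul_of_nonneg_left hgsq (by positivity)
    have h4 : 4 * (1 + ζ₀ ^ 2) * g ^ 2 = 4 * s ^ 2 * g ^ 2 := by rw [hs2]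
    clear_value s κ g
    linarith
end
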